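/- For any permutation g of a finite set Ω, if p is the smallest prime dividing the order of g (assuming g is not the identity), then the number of cycles of g (including fixed points as cycles of length 1) is at most |Ω|/p + ((p-1)/p)·fix(g), where fix(g) is the number of fixed points of g. -/

import Mathlib

open MulAction Finset


/-- The number of cycles (orbits of the cyclic group generated by `g`) of a
permutation `g` on `Ω`, counting fixed points as cycles of length 1. -/
noncomputable def orbCount {Ω : Type*} [Fintype Ω] (g : Equiv.Perm Ω) : ℕ :=
  Nat.card (Quotient (MulAction.orbitRel (Subgroup.zpowers g) Ω))

/-- The number of fixed points of a permutation `g` on `Ω`. -/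
noncomputable def fixCount {Ω : Type*} [Fintype Ω] (g : Equiv.Perm Ω) : ℕ :=
  Nat.card {ω : Ω // g ω = ω}

theorem stmt0 {Ω : Type*} [Fintype Ω] (g : Equiv.Perm Ω) (hg : g ≠ 1) :
    (orbCount g : ℝ) ≤
      (Fintype.card Ω : ℝ) / (orderOf g).minFac +
        (((orderOf g).minFac : ℝ) - 1) / (orderOf g).minFac * fixCount g := by
  classical
  set p := (orderOf g).minFac with hpdef
  have hord1 : orderOf g ≠ 1 := fun h => hg (orderOf_eq_one_iff.mp h)
  have hpp : p.Prime := Nat.minFac_prime hord1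
  set G := Subgroup.zpowers g with hG
  haveI : Fintype G := Fintype.ofFinite G
  have hcardG : Fintype.card G = orderOf g := by
    rw [← Nat.card_eq_fintype_card, Nat.card_zpowers]
  set Q := orbitRel.Quotient G Ω with hQ
  haveI : Fintype Q := Fintype.ofFinite Q
  have horbQ : orbCount g = Fintype.card Q := Nat.card_eq_fintype_card
  -- sum of orbit sizes
  have h1 : Fintype.card Ω = ∑ q : Q, Nat.card q.orbit := by
    rw [Fintype.card_congr (selfEquivSigmaOrbits' G Ω), Fintype.card_sigma]
    simp [Nat.card_eq_fintype_card]
    rfl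
  -- fixed points characterization
  have hfix : ∀ ω : Ω, ω ∈ MulAction.fixedPoints G Ω ↔ g ω = ω := by
    intro ω
    constructor
    · intro h; exact h ⟨g, Subgroup.mem_zpowers g⟩
    · rintro h ⟨m, k, rfl⟩
      exact Equiv.Perm.zpow_apply_eq_self_of_apply_eq_self h k
  have hcard1 : ∀ ω : Ω, g ω = ω ↔
      Nat.card (orbitRel.Quotient.orbit (Quotient.mk'' ω : Q)) = 1 := by
    intro ω
    rw [orbitRel.Quotient.orbit_mk, Nat.card_eq_fintype_card,
      ← mem_fixedPoints_iff_card_orbit_eq_one, hfix]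
  -- orbits of size ≠ 1 have size ≥ p
  have horbcard : ∀ q : Q, Nat.card q.orbit ≠ 1 → p ≤ Nat.card q.orbit := by
    intro q hq1
    have hdvd : Nat.card q.orbit ∣ orderOf g := by
      rw [orbitRel.Quotient.orbit_eq_orbit_out q Quotient.out_eq',
        Nat.card_eq_fintype_card]
      exact Dvd.intro _ ((card_orbit_mul_card_stabilizer_eq_card_group G
        (Quotient.out q)).trans hcardG)
    have h0 : 0 < Nat.card q.orbit := by
      rw [orbitRel.Quotient.orbit_eq_orbit_out q Quotient.out_eq']
      haveI : Nonempty (orbit G (Quotient.out q)) :=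
        (nonempty_orbit _).to_subtype
      exact Nat.card_pos
    exact Nat.minFac_le_of_dvd (by omega) hdvd
  -- fixCount equals number of singleton orbits
  set S : Finset Q := univ.filter (fun q => Nat.card q.orbit = 1) with hS
  have hfixS : fixCount g = S.card := by
    rw [hS, ← Fintype.card_subtype, ← Nat.card_eq_fintype_card]
    refine Nat.card_eq_of_bijective
      (fun ω => ⟨Quotient.mk'' ω.1, (hcard1 ω.1).mp ω.2⟩) ⟨?_, ?_⟩
    · rintro ⟨ω, hω⟩ ⟨ω', hω'⟩ h
      have h2 : (Quotient.mk'' ω : Q) = Quotient.mk'' ω' := congrArg Subtype.val h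
      have h3 : ω ∈ orbit G ω' := Quotient.eq''.mp h2
      obtain ⟨m, hm⟩ := h3
      obtain ⟨k, hk⟩ := m.2
      have hfx : (g ^ k) ω' = ω' :=
        Equiv.Perm.zpow_apply_eq_self_of_apply_eq_self hω' k
      have hm' : (↑m : Equiv.Perm Ω) ω' = ω := hm
      simp only [Subtype.mk.injEq]
      rw [← hm', ← hk, hfx]
    · rintro ⟨q, hq⟩
      have hout : g (Quotient.out q) = Quotient.out q := by
        rw [hcard1]
        rwa [Quotient.mk''_eq_mk, Quotient.out_eq]
      exact ⟨⟨Quotient.out q, hout⟩, by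
        simp [Quotient.mk''_eq_mk, Quotient.out_eq]⟩
  -- key nat inequality
  have key : p * Fintype.card Q ≤ Fintype.card Ω + (p - 1) * S.card := by
    have hsum1 : ∑ q : Q, (if Nat.card q.orbit = 1 then 1 else p) ≤
        ∑ q : Q, Nat.card q.orbit := by
      refine Finset.sum_le_sum fun q _ => ?_
      split
      · omega
      · exact horbcard q (by assumption)
    have hsum2 : ∑ q : Q, (if Nat.card q.orbit = 1 then p - 1 else 0) =
        (p - 1) * S.card := by
      rw [← Finset.sum_filter, Finset.sum_const, smul_eq_mul, hS, mul_comm]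
    calc p * Fintype.card Q = ∑ _q : Q, p := by
          rw [Finset.sum_const, card_univ, smul_eq_mul, mul_comm]
      _ = ∑ q : Q, ((if Nat.card q.orbit = 1 then 1 else p) +
            (if Nat.card q.orbit = 1 then p - 1 else 0)) := by
          refine Finset.sum_congr rfl fun q _ => ?_
          have := hpp.two_le
          split <;> omega
      _ = (∑ q : Q, (if Nat.card q.orbit = 1 then 1 else p)) +
            ∑ q : Q, (if Nat.card q.orbit = 1 then p - 1 else 0) :=
          Finset.sum_add_distrib
      _ ≤ (∑ q : Q, Nat.card q.orbit) + (p - 1) * S.card := by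
          rw [hsum2]; exact Nat.add_le_add_right hsum1 _
      _ = Fintype.card Ω + (p - 1) * S.card := by rw [← h1]
  -- conclude over ℝ
  have hp0 : (0 : ℝ) < p := by exact_mod_cast hpp.pos
  have heq : (Fintype.card Ω : ℝ) / p + ((p : ℝ) - 1) / p * fixCount g =
      ((Fintype.card Ω : ℝ) + ((p : ℝ) - 1) * fixCount g) / p := by ring
  rw [heq, le_div_iff₀ hp0]
  have hcast : ((p - 1 : ℕ) : ℝ) = (p : ℝ) - 1 := by
    have := hpp.one_lt.le
    push_cast [this]; ring
  rw [horbQ, hfixS, ← hcast]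
  calc (Fintype.card Q : ℝ) * p = ((p * Fintype.card Q : ℕ) : ℝ) := by
        push_cast; ring
    _ ≤ ((Fintype.card Ω + (p - 1) * S.card : ℕ) : ℝ) := by exact_mod_cast key
    _ = (Fintype.card Ω : ℝ) + ((p - 1 : ℕ) : ℝ) * S.card := by push_cast; ring
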